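/- Let E be m-dimensional Euclidean space, X ⊆ E a convex set, L_h ≥ 0, ζ > 0, and let h : E → ℝ be differentiable with gradient ∇h satisfying ‖∇h(a) − ∇h(b)‖ ≤ L_h‖a − b‖ for all a, b ∈ E. Let x ∈ X, d ∈ E, and let x⁺ ∈ X satisfy the projection optimality condition ⟨x − ζ·d − x⁺, w − x⁺⟩ ≤ 0 for all w ∈ X (i.e., x⁺ is the metric projection of x − ζd onto X). Then h(x⁺) − h(x) ≤ (ζ/2)·‖∇h(x) − d‖² + (L_h/2 − 1/(2ζ))·‖x⁺ − x‖². -/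

import Mathlib

set_option maxHeartbeats 800000


open scoped RealInnerProductSpace

/-- Descent estimate for one projected inexact-gradient step `x⁺ = Proj_X(x - ζ d)`:
if `∇h` is `L_h`-Lipschitz then
`h(x⁺) - h(x) ≤ (ζ/2)‖∇h(x) - d‖² + (L_h/2 - 1/(2ζ))‖x⁺ - x‖²`. -/
theorem stmt_15 {m : ℕ}
    (X : Set (EuclideanSpace ℝ (Fin m))) (hX : Convex ℝ X)
    (Lh ζ : ℝ) (hLh : 0 ≤ Lh) (hζ : 0 < ζ)
    (h : EuclideanSpace ℝ (Fin m) → ℝ)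
    (g : EuclideanSpace ℝ (Fin m) → EuclideanSpace ℝ (Fin m))
    (hgrad : ∀ a, HasGradientAt h (g a) a)
    (hglip : ∀ a b, ‖g a - g b‖ ≤ Lh * ‖a - b‖)
    (x xp d : EuclideanSpace ℝ (Fin m)) (hx : x ∈ X) (hxp : xp ∈ X)
    (hproj : ∀ w ∈ X, ⟪x - ζ • d - xp, w - xp⟫ ≤ 0) :
    h xp - h x ≤ (ζ / 2) * ‖g x - d‖ ^ 2 + (Lh / 2 - 1 / (2 * ζ)) * ‖xp - x‖ ^ 2 := by
  set v := xp - x with hv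
  -- continuity of g
  have hgc : Continuous g := by
    have : LipschitzWith (Real.toNNReal Lh) g := by
      apply LipschitzWith.of_dist_le_mul
      intro a b
      simpa [dist_eq_norm, Real.coe_toNNReal _ hLh] using hglip a b
    exact this.continuous
  -- derivative of t ↦ h (x + t • v)
  have hdv : ∀ t : ℝ, HasDerivAt (fun s : ℝ => h (x + s • v)) ⟪g (x + t • v), v⟫ t := by
    intro t
    have h1 : HasDerivAt (fun s : ℝ => x + s • v) v t := by
      simpa using ((hasDerivAt_id t).smul_const v).const_add x
    have h2 := ((hgrad (x + t • v)).hasFDerivAt).comp_hasDerivAt t h1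
    simp at h2
    exact h2
  have hcont : Continuous fun t : ℝ => ⟪g (x + t • v), v⟫ := by
    exact (hgc.comp (by continuity)).inner continuous_const
  have hint : h xp - h x = ∫ t in (0:ℝ)..1, ⟪g (x + t • v), v⟫ := by
    have := intervalIntegral.integral_eq_sub_of_hasDerivAt
      (f := fun s : ℝ => h (x + s • v)) (fun t _ => hdv t)
      (hcont.intervalIntegrable 0 1)
    simpa [hv] using this.symm
  -- pointwise bound
  have hbound : ∀ t ∈ Set.Icc (0:ℝ) 1,
      ⟪g (x + t • v), v⟫ ≤ ⟪g x, v⟫ + Lh * t * ‖v‖ ^ 2 := by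
    intro t ht
    have h1 : ⟪g (x + t • v) - g x, v⟫ ≤ ‖g (x + t • v) - g x‖ * ‖v‖ :=
      real_inner_le_norm _ _
    have h2 : ‖g (x + t • v) - g x‖ ≤ Lh * (t * ‖v‖) := by
      have := hglip (x + t • v) x
      simpa [norm_smul, abs_of_nonneg ht.1, mul_assoc] using this
    have h3 : ⟪g (x + t • v) - g x, v⟫ ≤ Lh * (t * ‖v‖) * ‖v‖ :=
      h1.trans (by nlinarith [norm_nonneg v])
    rw [inner_sub_left] at h3
    nlinarith [sq_nonneg ‖v‖, norm_nonneg v]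
  have hmono : (∫ t in (0:ℝ)..1, ⟪g (x + t • v), v⟫)
      ≤ ∫ t in (0:ℝ)..1, (⟪g x, v⟫ + Lh * t * ‖v‖ ^ 2) := by
    apply intervalIntegral.integral_mono_on (by norm_num)
      (hcont.intervalIntegrable 0 1)
      (((continuous_const.add ((continuous_const.mul continuous_id).mul continuous_const)) : Continuous fun t : ℝ => ⟪g x, v⟫ + Lh * t * ‖v‖ ^ 2).intervalIntegrable 0 1)
    exact hbound
  have hval : (∫ t in (0:ℝ)..1, (⟪g x, v⟫ + Lh * t * ‖v‖ ^ 2)) = ⟪g x, v⟫ + Lh / 2 * ‖v‖ ^ 2 := by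
    rw [intervalIntegral.integral_add (intervalIntegrable_const)
      ((by fun_prop : Continuous fun t : ℝ => Lh * t * ‖v‖ ^ 2).intervalIntegrable 0 1)]
    have : (∫ t in (0:ℝ)..1, Lh * t * ‖v‖ ^ 2) = Lh * ‖v‖ ^ 2 * ∫ t in (0:ℝ)..1, t := by
      rw [← intervalIntegral.integral_const_mul]
      congr 1; ext t; ring
    rw [this, integral_id]
    simp; ring
  have hkey : h xp - h x ≤ ⟪g x, v⟫ + Lh / 2 * ‖v‖ ^ 2 := by
    rw [hint]; exact hmono.trans (le_of_eq hval)
  -- projection inequality with w = x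
  have hp := hproj x hx
  have hp' : ζ * ⟪d, v⟫ ≤ -‖v‖ ^ 2 := by
    have heq : ⟪x - ζ • d - xp, x - xp⟫ = ‖v‖ ^ 2 + ζ * ⟪d, v⟫ := by
      have h0 : x - xp = -v := by simp [hv]
      rw [show x - ζ • d - xp = -v - ζ • d by rw [sub_right_comm, h0]]
      rw [h0, inner_sub_left, inner_neg_neg, real_inner_smul_left, inner_neg_right,
        real_inner_self_eq_norm_sq]
      ring
    rw [heq] at hp
    linarith
  -- Young's inequality
  have hy : ⟪g x - d, v⟫ ≤ ζ / 2 * ‖g x - d‖ ^ 2 + 1 / (2 * ζ) * ‖v‖ ^ 2 := by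
    have h1 : ⟪g x - d, v⟫ ≤ ‖g x - d‖ * ‖v‖ := real_inner_le_norm _ _
    have hc : 1 / (2 * ζ) * (2 * ζ) = 1 := by field_simp
    nlinarith [sq_nonneg (ζ * ‖g x - d‖ - ‖v‖), hζ, mul_pos hζ hζ]
  have hsplit : ⟪g x, v⟫ = ⟪g x - d, v⟫ + ⟪d, v⟫ := by
    rw [inner_sub_left]; ring
  have hζ' : 1 / (2 * ζ) * (2 * ζ) = 1 := by field_simp
  have hd : ⟪d, v⟫ ≤ -(1 / (2 * ζ)) * ‖v‖ ^ 2 - 1 / (2 * ζ) * ‖v‖ ^ 2 := by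
    have h2 : (2 * ζ) * ⟪d, v⟫ ≤ -2 * ‖v‖ ^ 2 := by linarith
    nlinarith [mul_pos hζ hζ, hζ]
  nlinarith [hkey, hy, hd, hsplit]
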